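/- arXiv:0709.1660 — 5 statements merged into one kernel-verified Lean document; each statement's English description precedes it below -/
import Mathlib

section
/- Assume F_A(b') is finite for every b' ∈ ℤ^m. Let b ∈ ℤ^m and let x ∈ F_A(b) be dominated, i.e. there exists y ∈ F_A(b) with C·y ⪇ C·x. Then there exist a minimal element α of L_C and a Pareto-optimal β of F_A(A·α) such that x − α + β has nonnegative components, x − α + β ∈ F_A(b), and C·(x − α + β) ⪇ C·x. -/
open Matrix

/-- Cast a vector of naturals to a vector of integers. -/
def toInt {n : ℕ} (x : Fin n → ℕ) : Fin n → ℤ := fun i => (x i : ℤ)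

/-- `domLt C v u` means `C·v ⪇ C·u`: componentwise `≤` with `C·v ≠ C·u`. -/
def domLt {n k : ℕ} (C : Matrix (Fin k) (Fin n) ℤ) (v u : Fin n → ℤ) : Prop :=
  (∀ j, C.mulVec v j ≤ C.mulVec u j) ∧ C.mulVec v ≠ C.mulVec u

/-- The feasible set `F_A(b) = {x ∈ ℕ^n : A·x = b}`. -/
def FA {m n : ℕ} (A : Matrix (Fin m) (Fin n) ℤ) (b : Fin m → ℤ) : Set (Fin n → ℕ) :=
  {x | A.mulVec (toInt x) = b}

/-- `x` is Pareto-optimal for `b`: feasible and not dominated by any feasible point. -/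
def ParetoOpt {m n k : ℕ} (A : Matrix (Fin m) (Fin n) ℤ) (C : Matrix (Fin k) (Fin n) ℤ)
    (b : Fin m → ℤ) (x : Fin n → ℕ) : Prop :=
  x ∈ FA A b ∧ ¬ ∃ y ∈ FA A b, domLt C (toInt y) (toInt x)

/-- The set `L_C` of dominated solutions of all fibers. -/
def LC {m n k : ℕ} (A : Matrix (Fin m) (Fin n) ℤ) (C : Matrix (Fin k) (Fin n) ℤ) :
    Set (Fin n → ℕ) :=
  {α | ∃ β : Fin n → ℕ, A.mulVec (toInt β) = A.mulVec (toInt α) ∧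
    domLt C (toInt β) (toInt α)}

/-- The minimal elements of `L_C` with respect to the componentwise order. -/
def minLC {m n k : ℕ} (A : Matrix (Fin m) (Fin n) ℤ) (C : Matrix (Fin k) (Fin n) ℤ) :
    Set (Fin n → ℕ) :=
  {α ∈ LC A C | ∀ α' ∈ LC A C, (∀ i, α' i ≤ α i) → α' = α}


lemma sum_lt_of_domLt' {k : ℕ} {f g : Fin k → ℤ} (h1 : ∀ j, f j ≤ g j) (h2 : f ≠ g) :
    ∑ j, f j < ∑ j, g j := by
  obtain ⟨i, hi⟩ := Function.ne_iff.mp h2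
  exact Finset.sum_lt_sum (fun j _ => h1 j) ⟨i, Finset.mem_univ i, lt_of_le_of_ne (h1 i) hi⟩

theorem dominated_reducible {m n k : ℕ} (hm : 0 < m) (hn : 0 < n) (hk : 0 < k)
    (A : Matrix (Fin m) (Fin n) ℤ) (C : Matrix (Fin k) (Fin n) ℤ)
    (hC : ∀ i j, 0 ≤ C i j)
    (hfin : ∀ b' : Fin m → ℤ, (FA A b').Finite)
    (b : Fin m → ℤ) (x : Fin n → ℕ) (hx : x ∈ FA A b)
    (hdom : ∃ y ∈ FA A b, domLt C (toInt y) (toInt x)) :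
    ∃ α ∈ minLC A C, ∃ β : Fin n → ℕ,
      ParetoOpt A C (A.mulVec (toInt α)) β ∧
      (∀ i, (0:ℤ) ≤ toInt x i - toInt α i + toInt β i) ∧
      A.mulVec (toInt x - toInt α + toInt β) = b ∧
      domLt C (toInt x - toInt α + toInt β) (toInt x) := by
  classical
  -- x ∈ L_C
  obtain ⟨y, hy, hyx⟩ := hdom
  have hxL : x ∈ LC A C := ⟨y, by rw [hy, hx], hyx⟩
  -- choose α ∈ L_C, α ≤ x, with minimal coordinate sum
  have hT : ∃ s : ℕ, ∃ α, α ∈ LC A C ∧ (∀ i, α i ≤ x i) ∧ (∑ i, α i) = s :=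
    ⟨∑ i, x i, x, hxL, fun i => le_refl _, rfl⟩
  obtain ⟨α, hαL, hαx, hαs⟩ := Nat.find_spec hT
  have hαmin : ∀ α' ∈ LC A C, (∀ i, α' i ≤ α i) → α' = α := by
    intro α' hα'L hle
    have h1 : ∑ i, α' i ≤ ∑ i, α i := Finset.sum_le_sum (fun i _ => hle i)
    have h2 : Nat.find hT ≤ ∑ i, α' i :=
      Nat.find_min' hT ⟨α', hα'L, fun i => le_trans (hle i) (hαx i), rfl⟩
    have hsum : ∑ i, α' i = ∑ i, α i := le_antisymm h1 (hαs ▸ h2)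
    funext i
    exact (Finset.sum_eq_sum_iff_of_le (fun i _ => hle i)).mp hsum i (Finset.mem_univ i)
  have hαmem : α ∈ minLC A C := ⟨hαL, hαmin⟩
  -- the witness from α ∈ L_C
  obtain ⟨β', hβ'A, hβ'dom⟩ := hαL
  -- fiber of Aα and the restricted set
  set F : Set (Fin n → ℕ) := FA A (A.mulVec (toInt α)) with hF
  set F' : Set (Fin n → ℕ) :=
    {y ∈ F | ∀ j, C.mulVec (toInt y) j ≤ C.mulVec (toInt α) j} with hF'
  have hβ'F' : β' ∈ F' := ⟨hβ'A, hβ'dom.1⟩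
  have hF'fin : F'.Finite := (hfin _).subset (fun y hy => hy.1)
  obtain ⟨β, hβF', hβmin⟩ := Set.exists_min_image F'
    (fun y => ∑ j, C.mulVec (toInt y) j) hF'fin ⟨β', hβ'F'⟩
  have hβF : β ∈ F := hβF'.1
  have hβle : ∀ j, C.mulVec (toInt β) j ≤ C.mulVec (toInt α) j := hβF'.2
  -- β dominates α strictly
  have hβ'sum : ∑ j, C.mulVec (toInt β') j < ∑ j, C.mulVec (toInt α) j :=
    sum_lt_of_domLt' hβ'dom.1 hβ'dom.2
  have hβsum : ∑ j, C.mulVec (toInt β) j < ∑ j, C.mulVec (toInt α) j :=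
    lt_of_le_of_lt (hβmin β' hβ'F') hβ'sum
  have hβne : C.mulVec (toInt β) ≠ C.mulVec (toInt α) := by
    intro h; rw [h] at hβsum; exact lt_irrefl _ hβsum
  -- β is Pareto optimal
  have hβpar : ParetoOpt A C (A.mulVec (toInt α)) β := by
    refine ⟨hβF, ?_⟩
    rintro ⟨z, hzF, hzdom⟩
    have hzF' : z ∈ F' := ⟨hzF, fun j => le_trans (hzdom.1 j) (hβle j)⟩
    have h1 := hβmin z hzF'
    have h2 := sum_lt_of_domLt' hzdom.1 hzdom.2
    exact absurd h1 (not_le.mpr h2)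
  refine ⟨α, hαmem, β, hβpar, ?_, ?_, ?_⟩
  · intro i
    have : (α i : ℤ) ≤ (x i : ℤ) := Int.ofNat_le.mpr (hαx i)
    simp only [toInt]
    have : (0:ℤ) ≤ (x i : ℤ) - (α i : ℤ) := by linarith
    positivity
  · rw [Matrix.mulVec_add, Matrix.mulVec_sub, hx, hβF]
    abel
  · constructor
    · intro j
      rw [Matrix.mulVec_add, Matrix.mulVec_sub]
      have := hβle j
      simp only [Pi.add_apply, Pi.sub_apply]
      linarith
    · intro h
      apply hβne
      funext j
      have := congrFun h j
      rw [Matrix.mulVec_add, Matrix.mulVec_sub] at this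
      simp only [Pi.add_apply, Pi.sub_apply] at this
      linarith
end

section
/- Let x ∈ F_A(b) be Pareto-optimal for b. Let α, β ∈ ℕ^n satisfy A·α = A·β, and suppose β is Pareto-optimal for A·β (i.e., in the fiber F_A(A·β)). If x − α + β has nonnegative components, then x − α + β ∈ F_A(b), and neither C·(x − α + β) ⪇ C·x nor C·x ⪇ C·(x − α + β) holds; that is, the reduced point x − α + β, when feasible, either equals x in objective values or is incomparable with x. -/
open Matrix

theorem pareto_reduction_incomparable {m n k : ℕ} (hm : 0 < m) (hn : 0 < n) (hk : 0 < k)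
    (A : Matrix (Fin m) (Fin n) ℤ) (C : Matrix (Fin k) (Fin n) ℤ)
    (hC : ∀ i j, 0 ≤ C i j)
    (b : Fin m → ℤ) (x : Fin n → ℕ) (hx : ParetoOpt A C b x)
    (α β : Fin n → ℕ)
    (hker : A.mulVec (toInt α) = A.mulVec (toInt β))
    (hβ : ParetoOpt A C (A.mulVec (toInt β)) β)
    (hpos : ∀ i, (0:ℤ) ≤ toInt x i - toInt α i + toInt β i) :
    A.mulVec (toInt x - toInt α + toInt β) = b ∧
    ¬ domLt C (toInt x - toInt α + toInt β) (toInt x) ∧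
    ¬ domLt C (toInt x) (toInt x - toInt α + toInt β) := by
  obtain ⟨hxF, hxP⟩ := hx
  obtain ⟨hβF, hβP⟩ := hβ
  have hfeas : A.mulVec (toInt x - toInt α + toInt β) = b := by
    rw [mulVec_add, mulVec_sub, hker, hxF]; abel
  refine ⟨hfeas, ?_, ?_⟩
  · intro hdom
    set y : Fin n → ℕ := fun i => (toInt x i - toInt α i + toInt β i).toNat with hy
    have hty : toInt y = toInt x - toInt α + toInt β := by
      funext i
      simp only [toInt, hy]
      exact Int.toNat_of_nonneg (hpos i)
    exact hxP ⟨y, by simpa [FA, hty] using hfeas, by rwa [hty]⟩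
  · intro hdom
    have hCz : C.mulVec (toInt x - toInt α + toInt β) =
        C.mulVec (toInt x) - C.mulVec (toInt α) + C.mulVec (toInt β) := by
      rw [mulVec_add, mulVec_sub]
    refine hβP ⟨α, hker, ?_, ?_⟩
    · intro j
      have := hdom.1 j
      rw [hCz] at this
      simp only [Pi.add_apply, Pi.sub_apply] at this
      linarith
    · intro hEq
      apply hdom.2
      rw [hCz, hEq]; abel
end

section
/- Assume F_A(b') is finite for every b' ∈ ℤ^m, and let b ∈ ℤ^m and x ∈ F_A(b). Then x is Pareto-optimal for b if and only if for every minimal element α of L_C and every Pareto-optimal β of F_A(A·α), whenever x − α + β has nonnegative components, C·(x − α + β) ⪇ C·x does not hold. (That is, in the ≺_C-skeleton of the b-fiber the points with no strictly improving outgoing reduction are exactly the Pareto-optimal solutions.) -/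
open Matrix

theorem pareto_iff_no_improving_reduction {m n k : ℕ} (hm : 0 < m) (hn : 0 < n) (hk : 0 < k)
    (A : Matrix (Fin m) (Fin n) ℤ) (C : Matrix (Fin k) (Fin n) ℤ)
    (hC : ∀ i j, 0 ≤ C i j)
    (hfin : ∀ b' : Fin m → ℤ, (FA A b').Finite)
    (b : Fin m → ℤ) (x : Fin n → ℕ) (hx : x ∈ FA A b) :
    ParetoOpt A C b x ↔
      ∀ α ∈ minLC A C, ∀ β : Fin n → ℕ,
        ParetoOpt A C (A.mulVec (toInt α)) β →
        (∀ i, (0:ℤ) ≤ toInt x i - toInt α i + toInt β i) →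
        ¬ domLt C (toInt x - toInt α + toInt β) (toInt x) := by

  constructor
  · rintro ⟨hxF, hnd⟩ α hα β hβ hpos hdom
    apply hnd
    set y : Fin n → ℕ := fun i => (toInt x i - toInt α i + toInt β i).toNat with hy
    have hyto : toInt y = toInt x - toInt α + toInt β := by
      funext i
      simp only [Pi.add_apply, Pi.sub_apply, toInt, hy]
      exact Int.toNat_of_nonneg (hpos i)
    refine ⟨y, ?_, ?_⟩
    · show A.mulVec (toInt y) = b
      rw [hyto, Matrix.mulVec_add, Matrix.mulVec_sub, hβ.1, hxF]
      abel
    · rwa [hyto]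
  · intro h
    refine ⟨hx, ?_⟩
    rintro ⟨y, hyF, hydom⟩
    have hxL : x ∈ LC A C := ⟨y, by rw [hyF, hx], hydom⟩
    -- find a minimal element α of L_C below x
    have hSfin : {γ | γ ∈ LC A C ∧ ∀ i, γ i ≤ x i}.Finite := by
      apply (Set.finite_Icc (0 : Fin n → ℕ) x).subset
      intro γ hγ
      exact Set.mem_Icc.mpr ⟨fun i => Nat.zero_le _, hγ.2⟩
    obtain ⟨α, ⟨hαL, hαx⟩, hαmin⟩ : ∃ a ∈ {γ | γ ∈ LC A C ∧ ∀ i, γ i ≤ x i}, ∀ a' ∈ {γ | γ ∈ LC A C ∧ ∀ i, γ i ≤ x i},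
          (∑ i, a' i) ≤ ∑ i, a i → (∑ i, a i) = ∑ i, a' i :=
      by
        obtain ⟨a, ha, hmin⟩ := hSfin.exists_minimalFor (fun γ => ∑ i, γ i) _ ⟨x, hxL, fun i => le_rfl⟩
        exact ⟨a, ha, fun a' ha' hle => le_antisymm (hmin ha' hle) hle⟩
    have hαminLC : α ∈ minLC A C := by
      refine ⟨hαL, fun α' hα'L hα'le => ?_⟩
      have h1 : (∑ i, α' i) ≤ ∑ i, α i := Finset.sum_le_sum fun i _ => hα'le i
      have h2 := hαmin α' ⟨hα'L, fun i => le_trans (hα'le i) (hαx i)⟩ h1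
      funext i
      exact (Finset.sum_eq_sum_iff_of_le (fun i _ => hα'le i)).mp h2.symm i
        (Finset.mem_univ i)
    -- find a Pareto-optimal β dominating α in its fiber
    obtain ⟨w, hwA, hwdom⟩ := hαL
    have hS2fin : {γ | γ ∈ FA A (A.mulVec (toInt α)) ∧
        domLt C (toInt γ) (toInt α)}.Finite :=
      (hfin (A.mulVec (toInt α))).subset fun γ hγ => hγ.1
    obtain ⟨β, ⟨hβF, hβdom⟩, hβmin⟩ : ∃ a ∈ {γ | γ ∈ FA A (A.mulVec (toInt α)) ∧ domLt C (toInt γ) (toInt α)},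
          ∀ a' ∈ {γ | γ ∈ FA A (A.mulVec (toInt α)) ∧ domLt C (toInt γ) (toInt α)},
          (∑ j, C.mulVec (toInt a') j) ≤ ∑ j, C.mulVec (toInt a) j →
          (∑ j, C.mulVec (toInt a) j) = ∑ j, C.mulVec (toInt a') j :=
      by
        obtain ⟨a, ha, hmin⟩ := hS2fin.exists_minimalFor (fun γ => ∑ j, C.mulVec (toInt γ) j) _ ⟨w, hwA, hwdom⟩
        exact ⟨a, ha, fun a' ha' hle => le_antisymm (hmin ha' hle) hle⟩
    have hβP : ParetoOpt A C (A.mulVec (toInt α)) β := by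
      refine ⟨hβF, ?_⟩
      rintro ⟨γ, hγF, hγdom⟩
      -- strict sum decrease
      have hne : ∃ j, C.mulVec (toInt γ) j < C.mulVec (toInt β) j := by
        by_contra hno
        push_neg at hno
        exact hγdom.2 (funext fun j => le_antisymm (hγdom.1 j) (hno j))
      obtain ⟨j0, hj0⟩ := hne
      have hlt : (∑ j, C.mulVec (toInt γ) j) < ∑ j, C.mulVec (toInt β) j :=
        Finset.sum_lt_sum (fun j _ => hγdom.1 j) ⟨j0, Finset.mem_univ j0, hj0⟩
      have hγmem : γ ∈ {γ | γ ∈ FA A (A.mulVec (toInt α)) ∧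
          domLt C (toInt γ) (toInt α)} := by
        refine ⟨hγF, fun j => le_trans (hγdom.1 j) (hβdom.1 j), fun hceq => ?_⟩
        have : (∑ j, C.mulVec (toInt γ) j) = ∑ j, C.mulVec (toInt α) j := by rw [hceq]
        have hβα : (∑ j, C.mulVec (toInt β) j) ≤ ∑ j, C.mulVec (toInt α) j :=
          Finset.sum_le_sum fun j _ => hβdom.1 j
        omega
      exact absurd (hβmin γ hγmem hlt.le) (by omega)
    -- apply the hypothesis to get a contradiction
    refine h α hαminLC β hβP (fun i => ?_) ?_
    · simp only [toInt]
      have := hαx i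
      have : (0:ℤ) ≤ (x i : ℤ) - (α i : ℤ) := by
        have := hαx i; omega
      have : (0:ℤ) ≤ (β i : ℤ) := Int.ofNat_nonneg _
      omega
    · have hmv : C.mulVec (toInt x - toInt α + toInt β)
          = C.mulVec (toInt x) - C.mulVec (toInt α) + C.mulVec (toInt β) := by
        rw [Matrix.mulVec_add, Matrix.mulVec_sub]
      constructor
      · intro j
        rw [hmv]
        have := hβdom.1 j
        simp only [Pi.add_apply, Pi.sub_apply]
        omega
      · rw [hmv]
        intro heq
        apply hβdom.2
        funext j
        have := congrFun heq j
        simp only [Pi.add_apply, Pi.sub_apply] at this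
        omega
end

section
/- Suppose F_A(b) is nonempty, fix x₀ ∈ F_A(b), and let M be a positive integer with M > (C·x₀)_j for every j = 1,…,k. Then every Pareto-optimal solution (y, z, x) of the extended multiobjective program EMIP(b) satisfies y = 0 and z = 0 (and hence A·x = b). -/
open Matrix

/-- Feasibility for the extended program `EMIP(b)`:
`(y, z, x)` satisfies `y i - z + (A·x) i = b i` for all `i`. -/
def EFeas {m n : ℕ} (A : Matrix (Fin m) (Fin n) ℤ) (b : Fin m → ℤ)
    (y : Fin m → ℕ) (z : ℕ) (x : Fin n → ℕ) : Prop :=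
  ∀ i, (y i : ℤ) - (z : ℤ) + A.mulVec (toInt x) i = b i

/-- The `j`-th objective value of the extended program `EMIP(b)`. -/
def Phi {m n k : ℕ} (C : Matrix (Fin k) (Fin n) ℤ) (M : ℤ)
    (y : Fin m → ℕ) (z : ℕ) (x : Fin n → ℕ) (j : Fin k) : ℤ :=
  M * ((∑ i, (y i : ℤ)) + (z : ℤ)) + C.mulVec (toInt x) j

/-- Pareto-optimality for the extended program `EMIP(b)`. -/
def EPareto {m n k : ℕ} (A : Matrix (Fin m) (Fin n) ℤ) (C : Matrix (Fin k) (Fin n) ℤ)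
    (M : ℤ) (b : Fin m → ℤ) (y : Fin m → ℕ) (z : ℕ) (x : Fin n → ℕ) : Prop :=
  EFeas A b y z x ∧
  ¬ ∃ y' z' x', EFeas A b y' z' x' ∧
      (∀ j, Phi C M y' z' x' j ≤ Phi C M y z x j) ∧
      (∃ j, Phi C M y' z' x' j < Phi C M y z x j)

theorem emip_pareto_zero {m n k : ℕ} (hm : 0 < m) (hn : 0 < n) (hk : 0 < k)
    (A : Matrix (Fin m) (Fin n) ℤ) (C : Matrix (Fin k) (Fin n) ℤ)
    (hC : ∀ i j, 0 ≤ C i j) (b : Fin m → ℤ)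
    (x₀ : Fin n → ℕ) (hx₀ : x₀ ∈ FA A b)
    (M : ℤ) (hMpos : 0 < M) (hM : ∀ j, C.mulVec (toInt x₀) j < M)
    (y : Fin m → ℕ) (z : ℕ) (x : Fin n → ℕ)
    (hpar : EPareto A C M b y z x) :
    y = 0 ∧ z = 0 ∧ A.mulVec (toInt x) = b := by
  obtain ⟨hfeas, hnd⟩ := hpar
  -- (0,0,x₀) is feasible
  have hfeas0 : EFeas A b (0 : Fin m → ℕ) 0 x₀ := by
    intro i
    simpa using congrFun hx₀ i
  have hCx : ∀ j, 0 ≤ C.mulVec (toInt x) j := by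
    intro j
    simp only [Matrix.mulVec, dotProduct, toInt]
    exact Finset.sum_nonneg fun i _ => mul_nonneg (hC j i) (Int.natCast_nonneg _)
  -- show sum y + z = 0
  have hS : (∑ i, (y i : ℤ)) + (z : ℤ) = 0 := by
    by_contra hne
    have hSnn : 0 ≤ (∑ i, (y i : ℤ)) + (z : ℤ) :=
      add_nonneg (Finset.sum_nonneg fun i _ => Int.natCast_nonneg _) (Int.natCast_nonneg _)
    have hS1 : 1 ≤ (∑ i, (y i : ℤ)) + (z : ℤ) := lt_of_le_of_ne hSnn (Ne.symm hne)
    apply hnd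
    refine ⟨0, 0, x₀, hfeas0, ?_, ?_⟩
    · intro j
      have h1 : Phi C M (0 : Fin m → ℕ) 0 x₀ j = C.mulVec (toInt x₀) j := by
        simp [Phi]
      have h2 : M ≤ M * ((∑ i, (y i : ℤ)) + (z : ℤ)) := le_mul_of_one_le_right hMpos.le hS1
      have := (hM j).le.trans (h2.trans (le_add_of_nonneg_right (hCx j)))
      simpa [Phi, h1] using this
    · refine ⟨⟨0, hk⟩, ?_⟩
      have h2 : M ≤ M * ((∑ i, (y i : ℤ)) + (z : ℤ)) := le_mul_of_one_le_right hMpos.le hS1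
      have := (hM ⟨0, hk⟩).trans_le (h2.trans (le_add_of_nonneg_right (hCx ⟨0, hk⟩)))
      simpa [Phi] using this
  have hy0 : ∀ i, y i = 0 := by
    intro i
    have hzsum : (∑ i, (y i : ℤ)) = 0 ∧ (z : ℤ) = 0 := by
      constructor
      · linarith [Finset.sum_nonneg (fun i (_ : i ∈ Finset.univ) => Int.natCast_nonneg (y i)),
          Int.natCast_nonneg z]
      · linarith [Finset.sum_nonneg (fun i (_ : i ∈ Finset.univ) => Int.natCast_nonneg (y i)),
          Int.natCast_nonneg z]
    have := (Finset.sum_eq_zero_iff_of_nonneg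
      (fun i _ => Int.natCast_nonneg (y i))).mp hzsum.1 i (Finset.mem_univ i)
    exact_mod_cast this
  have hz0 : z = 0 := by
    have : (z : ℤ) = 0 := by
      linarith [Finset.sum_nonneg (fun i (_ : i ∈ Finset.univ) => Int.natCast_nonneg (y i)),
        Int.natCast_nonneg z]
    exact_mod_cast this
  refine ⟨funext hy0, hz0, funext fun i => ?_⟩
  have := hfeas i
  rw [hy0 i, hz0] at this
  simpa using this
end

section
/- Let M be a positive integer with M > (C·x')_j for every x' ∈ F_A(b) and every j = 1,…,k. Then for every x ∈ ℕ^n with A·x = b, the point (0, 0, x) is Pareto-optimal for the extended multiobjective program EMIP(b) if and only if x is Pareto-optimal for MIP_{A,C}(b). -/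
open Matrix

theorem emip_pareto_iff_mip_pareto {m n k : ℕ} (hm : 0 < m) (hn : 0 < n) (hk : 0 < k)
    (A : Matrix (Fin m) (Fin n) ℤ) (C : Matrix (Fin k) (Fin n) ℤ)
    (hC : ∀ i j, 0 ≤ C i j) (b : Fin m → ℤ)
    (M : ℤ) (hMpos : 0 < M)
    (hM : ∀ x' ∈ FA A b, ∀ j, C.mulVec (toInt x') j < M)
    (x : Fin n → ℕ) (hx : A.mulVec (toInt x) = b) :
    EPareto A C M b 0 0 x ↔ ParetoOpt A C b x := by
  have hxF : x ∈ FA A b := hx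
  constructor
  · rintro ⟨hfeas, hnd⟩
    refine ⟨hxF, ?_⟩
    rintro ⟨y, hy, hle, hne⟩
    apply hnd
    refine ⟨0, 0, y, ?_, ?_, ?_⟩
    · intro i
      have := congrFun hy i
      simp [this]
    · intro j
      simpa [Phi] using hle j
    · obtain ⟨j, hj⟩ : ∃ j, C.mulVec (toInt y) j < C.mulVec (toInt x) j := by
        by_contra h
        push_neg at h
        exact hne (funext fun j => le_antisymm (hle j) (h j))
      exact ⟨j, by simpa [Phi] using hj⟩
  · rintro ⟨-, hnd⟩
    refine ⟨?_, ?_⟩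
    · intro i
      have := congrFun hx i
      simp [this]
    rintro ⟨y', z', x', hf, hle, ⟨j, hj⟩⟩
    have hCx' : ∀ j', 0 ≤ C.mulVec (toInt x') j' := by
      intro j'
      simp only [Matrix.mulVec, dotProduct]
      exact Finset.sum_nonneg fun i _ => mul_nonneg (hC j' i) (Int.ofNat_nonneg _)
    have hsum0 : 0 ≤ ∑ i, (y' i : ℤ) := Finset.sum_nonneg fun i _ => Int.ofNat_nonneg _
    have hz0 : (0:ℤ) ≤ (z' : ℤ) := Int.ofNat_nonneg _
    have h2 : C.mulVec (toInt x) j < M := hM x hxF j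
    have hjlt : M * ((∑ i, (y' i : ℤ)) + z') + C.mulVec (toInt x') j
        < C.mulVec (toInt x) j := by simpa [Phi] using hj
    have hS0 : (∑ i, (y' i : ℤ)) + z' = 0 := by
      nlinarith [hCx' j]
    have hz'0 : (z' : ℤ) = 0 := by omega
    have hsz : (∑ i, (y' i : ℤ)) = 0 := by omega
    have hy'0 : ∀ i, (y' i : ℤ) = 0 := fun i =>
      (Finset.sum_eq_zero_iff_of_nonneg (fun i _ => Int.ofNat_nonneg (y' i))).1 hsz
        i (Finset.mem_univ i)
    have hx'F : x' ∈ FA A b := by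
      funext i
      have := hf i
      rw [hy'0 i, hz'0] at this
      linarith
    have hlecx : ∀ j', C.mulVec (toInt x') j' ≤ C.mulVec (toInt x) j' := by
      intro j'
      have := hle j'
      simp only [Phi, hS0] at this
      simpa using this
    have hltcx : C.mulVec (toInt x') j < C.mulVec (toInt x) j := by
      rw [hS0] at hjlt
      simpa using hjlt
    exact hnd ⟨x', hx'F, hlecx, fun h => absurd (congrFun h j) (ne_of_lt hltcx)⟩
end
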